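/- arXiv:0809.1194 — 6 statements merged into one kernel-verified Lean document; each statement's English description precedes it below -/
import Mathlib

section
/- Let N ≥ 1 and let z_1, …, z_n be elements of ℤ[ζ_N] (viewed inside ℂ) such that |z_1|² + … + |z_n|² = r for some rational number r with 0 < r ≤ 1. Then there exists an index i₀ such that z_i = 0 for all i ≠ i₀ and z_{i₀} is a root of unity; in particular r = 1. -/
set_option maxHeartbeats 1000000
open IntermediateField Complex

private lemma aux_conj_pow {u : ℂ} {N : ℕ} (hN : 1 ≤ N) (h : u ^ N = 1) :
    (starRingEnd ℂ) u = u ^ (N - 1) := by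
  have hnorm : ‖u‖ = 1 := Complex.norm_eq_one_of_pow_eq_one h (by omega)
  have h0 : u ≠ 0 := by rintro rfl; simp at hnorm
  have : u ^ (N - 1) * u = 1 := by
    rw [← pow_succ]
    rwa [Nat.sub_add_cancel hN]
  have hinv : u ^ (N - 1) = u⁻¹ := eq_inv_of_mul_eq_one_left this
  rw [hinv, Complex.inv_eq_conj hnorm]

private lemma aux_int_rat {r : ℚ} (h : IsIntegral ℤ (r : ℂ)) : ∃ m : ℤ, (m : ℚ) = r := by
  have : IsIntegral ℤ r := by
    rwa [← isIntegral_algebraMap_iff (algebraMap ℚ ℂ).injective]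
  exact IsIntegrallyClosed.isIntegral_iff.mp this

/-- Proposition (Kronecker-type): if cyclotomic integers `z_1, …, z_n` satisfy
`|z_1|² + … + |z_n|² = r` for a rational `0 < r ≤ 1`, then all `z_i` vanish except
one, which is a root of unity, and `r = 1`. -/
theorem stmt0 (N n : ℕ) (hN : 1 ≤ N) (ζ : ℂ) (hζ : IsPrimitiveRoot ζ N)
    (z : Fin n → ℂ) (hz : ∀ i, z i ∈ Subring.closure ({ζ} : Set ℂ))
    (r : ℚ) (hr0 : 0 < r) (hr1 : r ≤ 1)
    (hsum : ∑ i, z i * (starRingEnd ℂ) (z i) = (r : ℂ)) :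
    (∃ i₀ : Fin n, (∀ i, i ≠ i₀ → z i = 0) ∧ ∃ m : ℕ, 0 < m ∧ z i₀ ^ m = 1) ∧ r = 1 := by
  classical
  have hNpos : 0 < N := hN
  have hζN : ζ ^ N = 1 := hζ.pow_eq_one
  have hζint : IsIntegral ℤ ζ := hζ.isIntegral hNpos
  have hconjζ : (starRingEnd ℂ) ζ = ζ ^ (N - 1) := aux_conj_pow hN hζN
  -- conjugates stay in the closure
  have hzconj : ∀ i, (starRingEnd ℂ) (z i) ∈ Subring.closure ({ζ} : Set ℂ) := by
    intro i
    have h1 : (Subring.closure ({ζ} : Set ℂ)).map (starRingEnd ℂ) =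
        Subring.closure ((starRingEnd ℂ) '' {ζ}) := RingHom.map_closure _ _
    have h2 : ((starRingEnd ℂ) '' {ζ} : Set ℂ) = {ζ ^ (N - 1)} := by
      simp [hconjζ]
    have h3 : Subring.closure ({ζ ^ (N - 1)} : Set ℂ) ≤ Subring.closure ({ζ} : Set ℂ) := by
      have hζmem : ζ ∈ Subring.closure ({ζ} : Set ℂ) := Subring.subset_closure rfl
      have hpmem : ζ ^ (N - 1) ∈ Subring.closure ({ζ} : Set ℂ) := pow_mem hζmem (N - 1)
      rw [Subring.closure_le]
      intro x hx
      rw [Set.mem_singleton_iff] at hx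
      subst hx
      exact hpmem
    have : (starRingEnd ℂ) (z i) ∈ (Subring.closure ({ζ} : Set ℂ)).map (starRingEnd ℂ) :=
      ⟨z i, hz i, rfl⟩
    rw [h1, h2] at this
    exact h3 this
  -- all elements of the closure are algebraic integers
  have hint : ∀ x ∈ Subring.closure ({ζ} : Set ℂ), IsIntegral ℤ x := by
    intro x hx
    have : Subring.closure ({ζ} : Set ℂ) ≤ (integralClosure ℤ ℂ).toSubring := by
      rw [Subring.closure_le]
      simpa [mem_integralClosure_iff] using hζint
    exact this hx
  -- the sum of |z i|² in real terms
  have hsumR : ∑ i, Complex.normSq (z i) = (r : ℝ) := by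
    have : ((∑ i, Complex.normSq (z i) : ℝ) : ℂ) = ((r : ℝ) : ℂ) := by
      push_cast
      rw [← hsum]
      exact Finset.sum_congr rfl fun i _ => (Complex.mul_conj (z i)).symm
    exact_mod_cast this
  -- Step 1 : r = 1
  have hrint : IsIntegral ℤ ((r : ℚ) : ℂ) := by
    rw [← hsum]
    exact IsIntegral.sum _ fun i _ => (hint _ (hz i)).mul (hint _ (hzconj i))
  obtain ⟨m, hm⟩ := aux_int_rat hrint
  have hr : r = 1 := by
    have h1 : (0 : ℚ) < (m : ℚ) := hm ▸ hr0
    have h2 : (m : ℚ) ≤ 1 := hm ▸ hr1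
    have : m = 1 := by
      have : 0 < m := by exact_mod_cast h1
      have : m ≤ 1 := by exact_mod_cast h2
      omega
    rw [← hm, this]; norm_num
  subst hr
  refine ⟨?_, rfl⟩
  -- set up the number field K = ℚ(ζ)
  have hζQ : IsIntegral ℚ ζ := hζint.tower_top
  set K : IntermediateField ℚ ℂ := ℚ⟮ζ⟯ with hK
  haveI : FiniteDimensional ℚ K := IntermediateField.adjoin.finiteDimensional hζQ
  haveI : NumberField K := ⟨⟩
  have hclosK : Subring.closure ({ζ} : Set ℂ) ≤ K.toSubring := by
    rw [Subring.closure_le]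
    simpa using mem_adjoin_simple_self ℚ ζ
  have hzK : ∀ i, z i ∈ K := fun i => hclosK (hz i)
  -- conjugation maps K into K
  have hconjK : ∀ x : K, (starRingEnd ℂ) (x : ℂ) ∈ K := by
    intro x
    have himg : K.map ((starRingEnd ℂ).toRatAlgHom) ≤ K := by
      rw [hK, adjoin_map]
      have : ((starRingEnd ℂ).toRatAlgHom) '' {ζ} = {ζ ^ (N - 1)} := by
        simp [RingHom.toRatAlgHom, hconjζ]
      rw [this]
      rw [show ({ζ ^ (N-1)} : Set ℂ) = {ζ ^ (N-1)} from rfl]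
      exact (adjoin_simple_le_iff).2 (pow_mem (mem_adjoin_simple_self ℚ ζ) _)
    exact himg ⟨x, x.2, rfl⟩
  -- the conjugation as an algebra endomorphism of K
  let cK : K →ₐ[ℚ] K :=
    AlgHom.codRestrict (((starRingEnd ℂ).toRatAlgHom).comp K.val) K.toSubalgebra hconjK
  have hcK : ∀ x : K, ((cK x : K) : ℂ) = (starRingEnd ℂ) (x : ℂ) := fun x => rfl
  -- key: every embedding commutes with conjugation
  let pb : PowerBasis ℚ K := IntermediateField.adjoin.powerBasis hζQ
  have hpbgen : ((pb.gen : K) : ℂ) = ζ := rfl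
  have hcomm : ∀ φ : K →ₐ[ℚ] ℂ, ∀ x : K, φ (cK x) = (starRingEnd ℂ) (φ x) := by
    intro φ x
    have hgenpow : pb.gen ^ N = 1 := by
      apply Subtype.ext
      push_cast [hpbgen]
      exact hζN
    have : φ.comp cK = ((starRingEnd ℂ).toRatAlgHom).comp φ := by
      apply pb.algHom_ext
      have h1 : cK pb.gen = pb.gen ^ (N - 1) := by
        apply Subtype.ext
        push_cast [hcK, hpbgen]
        exact hconjζ
      have h2 : (φ pb.gen) ^ N = 1 := by
        rw [← map_pow, hgenpow, map_one]
      simp only [AlgHom.comp_apply, h1, map_pow]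
      rw [show ((starRingEnd ℂ).toRatAlgHom) (φ pb.gen) = (starRingEnd ℂ) (φ pb.gen) from rfl]
      rw [aux_conj_pow hN h2]
    have := congrArg (fun f => f x) this
    simpa using this
  -- the elements as elements of K
  let w : Fin n → K := fun i => ⟨z i, hzK i⟩
  have hwint : ∀ i, IsIntegral ℤ (w i) := by
    intro i
    rw [← isIntegral_algebraMap_iff (algebraMap K ℂ).injective]
    exact hint _ (hz i)
  have hsumK : ∑ i, w i * cK (w i) = algebraMap ℚ K 1 := by
    apply Subtype.ext
    push_cast [hcK]
    simpa using hsum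
  -- embedding sums
  have hφsum : ∀ φ : K →ₐ[ℚ] ℂ, ∑ i, Complex.normSq (φ (w i)) = 1 := by
    intro φ
    have h0 := congrArg φ hsumK
    rw [map_sum, AlgHom.commutes] at h0
    simp only [map_mul, hcomm φ] at h0
    rw [map_one] at h0
    have h2 : ((∑ i, Complex.normSq (φ (w i)) : ℝ) : ℂ) = ((1 : ℝ) : ℂ) := by
      push_cast
      rw [← h0]
      exact Finset.sum_congr rfl fun i _ => (Complex.mul_conj (φ (w i))).symm
    exact_mod_cast h2
  have hφle : ∀ φ : K →ₐ[ℚ] ℂ, ∀ i, Complex.normSq (φ (w i)) ≤ 1 := by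
    intro φ i
    rw [← hφsum φ]
    exact Finset.single_le_sum (f := fun j => Complex.normSq (φ (w j)))
      (fun j _ => Complex.normSq_nonneg _) (Finset.mem_univ i)
  -- for nonzero z i, all embeddings have norm 1
  have hnorm1 : ∀ i, z i ≠ 0 → ∀ φ : K →ₐ[ℚ] ℂ, Complex.normSq (φ (w i)) = 1 := by
    intro i hi φ
    set t : K := w i * cK (w i) with ht
    have htint : IsIntegral ℤ t := (hwint i).mul (by
      rw [← isIntegral_algebraMap_iff (algebraMap K ℂ).injective]
      exact hint _ (hzconj i))
    have htne : t ≠ 0 := by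
      intro h
      apply hi
      have := congrArg (algebraMap K ℂ) h
      push_cast [ht, hcK] at this
      simpa [Complex.mul_conj, Complex.normSq_eq_zero] using
        (by exact_mod_cast this : z i * (starRingEnd ℂ) (z i) = 0)
    set q : ℚ := Algebra.norm ℚ t with hq
    have hqprod : (algebraMap ℚ ℂ) q = ∏ φ' : K →ₐ[ℚ] ℂ, φ' t :=
      Algebra.norm_eq_prod_embeddings ℚ ℂ t
    have hφt : ∀ φ' : K →ₐ[ℚ] ℂ, φ' t = (Complex.normSq (φ' (w i)) : ℂ) := by
      intro φ'
      rw [ht, map_mul, hcomm φ', Complex.mul_conj]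
    have hqreal : (q : ℝ) = ∏ φ' : K →ₐ[ℚ] ℂ, Complex.normSq (φ' (w i)) := by
      have : ((q : ℝ) : ℂ) = ((∏ φ' : K →ₐ[ℚ] ℂ, Complex.normSq (φ' (w i)) : ℝ) : ℂ) := by
        push_cast
        rw [show ((q : ℚ) : ℂ) = algebraMap ℚ ℂ q from rfl, hqprod]
        exact Finset.prod_congr rfl fun φ' _ => hφt φ'
      exact_mod_cast this
    have hqne : q ≠ 0 := by
      rw [hq]
      rw [Algebra.norm_ne_zero_iff]
      exact htne
    obtain ⟨mq, hmq⟩ := aux_int_rat (by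
      rw [show ((q : ℚ) : ℂ) = algebraMap ℚ ℂ q from rfl]
      exact (Algebra.isIntegral_norm ℚ htint).map (IsScalarTower.toAlgHom ℤ ℚ ℂ))
    have hq1 : 1 ≤ (q : ℝ) := by
      have hmqne : mq ≠ 0 := by
        intro h; apply hqne; rw [← hmq, h]; norm_num
      have hqpos : 0 < (q : ℝ) := by
        rw [hqreal]
        apply lt_of_le_of_ne (Finset.prod_nonneg fun _ _ => Complex.normSq_nonneg _)
        intro h
        apply hqne
        exact_mod_cast (hqreal.trans h.symm)
      have : (1 : ℚ) ≤ q := by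
        rw [← hmq] at hqpos ⊢
        have : 0 < mq := by exact_mod_cast hqpos
        exact_mod_cast this
      exact_mod_cast this
    -- each factor is between 0 and 1 and the product is ≥ 1: each factor = 1
    refine le_antisymm (hφle φ i) ?_
    have herase : ∏ φ' ∈ Finset.univ.erase φ, Complex.normSq (φ' (w i)) ≤ 1 :=
      Finset.prod_le_one (fun _ _ => Complex.normSq_nonneg _) (fun φ' _ => hφle φ' i)
    have : (q : ℝ) ≤ Complex.normSq (φ (w i)) := by
      rw [hqreal, ← Finset.mul_prod_erase _ _ (Finset.mem_univ φ)]
      calc Complex.normSq (φ (w i)) * ∏ φ' ∈ Finset.univ.erase φ, Complex.normSq (φ' (w i))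
          ≤ Complex.normSq (φ (w i)) * 1 :=
            mul_le_mul_of_nonneg_left herase (Complex.normSq_nonneg _)
        _ = _ := mul_one _
    linarith
  -- the identity embedding
  let φ0 : K →ₐ[ℚ] ℂ := K.val
  have hφ0 : ∀ i, φ0 (w i) = z i := fun i => rfl
  -- existence of a nonzero index
  have hex : ∃ i, z i ≠ 0 := by
    by_contra h
    push_neg at h
    rw [Finset.sum_eq_zero (fun i _ => by rw [h i]; simp)] at hsumR
    norm_num at hsumR
  obtain ⟨i₀, hi₀⟩ := hex
  have hns : ∀ i, z i ≠ 0 → Complex.normSq (z i) = 1 := by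
    intro i hi
    have := hnorm1 i hi φ0
    rwa [hφ0] at this
  refine ⟨i₀, ?_, ?_⟩
  · intro j hj
    by_contra hjz
    have h1 : Complex.normSq (z i₀) = 1 := hns i₀ hi₀
    have h2 : Complex.normSq (z j) = 1 := hns j hjz
    have hsplit : ∑ i, Complex.normSq (z i)
        = Complex.normSq (z i₀) + ∑ i ∈ Finset.univ.erase i₀, Complex.normSq (z i) :=
      (Finset.add_sum_erase _ _ (Finset.mem_univ i₀)).symm
    have hge : Complex.normSq (z j) ≤ ∑ i ∈ Finset.univ.erase i₀, Complex.normSq (z i) :=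
      Finset.single_le_sum (fun k _ => Complex.normSq_nonneg _)
        (Finset.mem_erase.2 ⟨hj, Finset.mem_univ j⟩)
    rw [hsplit, h1] at hsumR
    rw [h2] at hge
    push_cast at hsumR
    linarith
  · -- root of unity
    have hall : ∀ φ : K →+* ℂ, ‖φ (w i₀)‖ = 1 := by
      intro φ
      have := hnorm1 i₀ hi₀ φ.toRatAlgHom
      have h' : Complex.normSq (φ (w i₀)) = 1 := this
      have := Complex.normSq_eq_norm_sq (φ (w i₀))
      rw [h'] at this
      have habs : ‖φ (w i₀)‖ = 1 := by nlinarith [norm_nonneg (φ (w i₀))]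
      exact habs
    obtain ⟨m, hm0, hmw⟩ :=
      NumberField.Embeddings.pow_eq_one_of_norm_eq_one K ℂ (hwint i₀) hall
    refine ⟨m, hm0, ?_⟩
    have := congrArg (algebraMap K ℂ) hmw
    push_cast at this
    exact_mod_cast this
end

section
/- Let K ⊆ ℂ be a finite Galois extension of ℚ that is stable under complex conjugation, and assume that the restriction of complex conjugation to K is a central element of the Galois group Gal(K/ℚ). Let z_1, …, z_n ∈ K be algebraic integers such that |z_1|² + … + |z_n|² = r for some rational number r with 0 < r ≤ 1. Then there exists an index i₀ such that z_i = 0 for all i ≠ i₀ and z_{i₀} is a root of unity; in particular r = 1. -/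
set_option maxHeartbeats 1000000
set_option synthInstance.maxHeartbeats 400000

/-- Generalization: if `K ⊆ ℂ` is a finite Galois extension of `ℚ` stable under complex
conjugation, whose restriction of complex conjugation is central in `Gal(K/ℚ)`, and
`z_1, …, z_n ∈ K` are algebraic integers with `|z_1|² + … + |z_n|² = r` for a rational
`0 < r ≤ 1`, then all `z_i` vanish except one, which is a root of unity, and `r = 1`. -/
theorem stmt1 (K : IntermediateField ℚ ℂ) [FiniteDimensional ℚ K] [IsGalois ℚ K]
    (hstab : ∀ z ∈ K, (starRingEnd ℂ) z ∈ K)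
    (τ : K ≃ₐ[ℚ] K) (hτ : ∀ z : K, (τ z : ℂ) = (starRingEnd ℂ) (z : ℂ))
    (hcentral : ∀ σ : K ≃ₐ[ℚ] K, σ * τ = τ * σ)
    (n : ℕ) (z : Fin n → ℂ) (hzK : ∀ i, z i ∈ K) (hint : ∀ i, IsIntegral ℤ (z i))
    (r : ℚ) (hr0 : 0 < r) (hr1 : r ≤ 1)
    (hsum : ∑ i, z i * (starRingEnd ℂ) (z i) = (r : ℂ)) :
    (∃ i₀ : Fin n, (∀ i, i ≠ i₀ → z i = 0) ∧ ∃ m : ℕ, 0 < m ∧ z i₀ ^ m = 1) ∧ r = 1 := by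
  classical
  haveI : NumberField K := ⟨⟩
  have hKinj : Function.Injective (algebraMap K ℂ) := (algebraMap (↥K) ℂ).injective
  set w : Fin n → K := fun i => ⟨z i, hzK i⟩ with hwdef
  have hwc : ∀ i, (algebraMap K ℂ) (w i) = z i := fun i => rfl
  -- integrality of the `w i` and their conjugates
  have hwint : ∀ i, IsIntegral ℤ (w i) := by
    intro i
    rw [← isIntegral_algebraMap_iff hKinj, hwc]
    exact hint i
  have hτwint : ∀ i, IsIntegral ℤ (τ (w i)) := by
    intro i
    rw [← isIntegral_algebraMap_iff hKinj]
    show IsIntegral ℤ ((τ (w i) : ℂ))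
    rw [hτ]
    exact (hint i).map (starRingEnd ℂ).toIntAlgHom
  -- the sum inside K
  have hs : (∑ i, w i * τ (w i)) = algebraMap ℚ K r := by
    apply hKinj
    rw [map_sum, ← IsScalarTower.algebraMap_apply ℚ K ℂ]
    have hrc : (algebraMap ℚ ℂ) r = (r : ℂ) := by norm_num
    rw [hrc, ← hsum]
    refine Finset.sum_congr rfl fun i _ => ?_
    rw [map_mul, hwc]
    congr 1
    exact hτ (w i)
  -- r = 1
  have hrint : IsIntegral ℤ (r : ℚ) := by
    rw [← isIntegral_algebraMap_iff (algebraMap ℚ K).injective, ← hs]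
    exact IsIntegral.sum _ fun i _ => (hwint i).mul (hτwint i)
  obtain ⟨m, hm⟩ := IsIntegrallyClosed.isIntegral_iff.mp hrint
  have hmr : (m : ℚ) = r := by exact_mod_cast hm
  have hr1' : r = 1 := by
    have h1 : (0 : ℤ) < m := by exact_mod_cast hmr ▸ hr0
    have h2 : m ≤ 1 := by exact_mod_cast hmr ▸ hr1
    have : m = 1 := le_antisymm h2 h1
    rw [← hmr, this]; norm_num
  subst hr1'
  -- key: for every ℚ-embedding f : K → ℂ, the sum of |f (w i)|² is 1
  have key : ∀ f : K →ₐ[ℚ] ℂ, ∑ i, Complex.normSq (f (w i)) = 1 := by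
    intro f
    set σ : K ≃ₐ[ℚ] K := f.restrictNormal' K with hσdef
    have hσ : ∀ x : K, (algebraMap K ℂ) (σ x) = f x := by
      intro x
      have := f.restrictNormal_commutes K x
      simpa [hσdef, AlgHom.restrictNormal'] using this
    have hsum2 : ∑ i, (f (w i)) * (starRingEnd ℂ) (f (w i)) = 1 := by
      have : ∀ i, (f (w i)) * (starRingEnd ℂ) (f (w i))
          = (algebraMap K ℂ) (σ (w i) * τ (σ (w i))) := by
        intro i
        rw [map_mul, hσ]
        congr 1
        rw [show (algebraMap K ℂ) (τ (σ (w i))) = ((τ (σ (w i)) : ℂ)) from rfl, hτ (σ (w i))]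
        congr 1
        exact (hσ (w i)).symm
      simp_rw [this]
      have hτσ : ∀ x : K, τ (σ x) = σ (τ x) := by
        intro x
        have := hcentral σ
        have := congrArg (fun g : K ≃ₐ[ℚ] K => g x) this
        simpa using this.symm
      simp_rw [hτσ]
      rw [← map_sum]
      have hcomb : ∑ x, σ (w x) * σ (τ (w x)) = σ (∑ x, w x * τ (w x)) := by
        rw [map_sum]
        exact Finset.sum_congr rfl fun i _ => (map_mul σ _ _).symm
      rw [hcomb, hs]
      simp
    have : ∑ i, ((Complex.normSq (f (w i)) : ℂ)) = 1 := by
      simp_rw [← Complex.mul_conj]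
      exact hsum2
    exact_mod_cast this
  -- bound: each |f (w i)| ≤ 1
  have hle : ∀ (f : K →ₐ[ℚ] ℂ) (i : Fin n), Complex.normSq (f (w i)) ≤ 1 := by
    intro f i
    rw [← key f]
    exact Finset.single_le_sum (f := fun j => Complex.normSq (f (w j)))
      (fun j _ => Complex.normSq_nonneg _) (Finset.mem_univ i)
  -- some z i₀ is nonzero
  have hex : ∃ i₀, z i₀ ≠ 0 := by
    by_contra h
    push_neg at h
    simp only [h, zero_mul, Finset.sum_const_zero] at hsum
    norm_num at hsum
  obtain ⟨i₀, hi₀⟩ := hex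
  have hwi₀ : w i₀ ≠ 0 := by
    intro h
    apply hi₀
    rw [← hwc i₀, h, map_zero]
  -- norm of w i₀ : a nonzero rational integer
  have hNint : IsIntegral ℤ (Algebra.norm ℚ (w i₀)) := Algebra.isIntegral_norm ℚ (hwint i₀)
  obtain ⟨N, hN⟩ := IsIntegrallyClosed.isIntegral_iff.mp hNint
  have hNne : N ≠ 0 := by
    intro h
    have h0 : (Algebra.norm ℚ) (w i₀) = 0 := by rw [← hN, h]; simp
    exact hwi₀ ((Algebra.norm_eq_zero_iff (R := ℚ)).mp h0)
  have hprod : (1 : ℝ) ≤ ∏ f : K →ₐ[ℚ] ℂ, ‖f (w i₀)‖ := by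
    have hpe := Algebra.norm_eq_prod_embeddings ℚ ℂ (w i₀)
    have : ‖(algebraMap ℚ ℂ) (Algebra.norm ℚ (w i₀))‖
        = ∏ f : K →ₐ[ℚ] ℂ, ‖f (w i₀)‖ := by
      rw [hpe, norm_prod]
    rw [← this]
    rw [← hN]
    have : ‖(algebraMap ℚ ℂ) ((algebraMap ℤ ℚ) N)‖ = |(N : ℝ)| := by
      push_cast
      simp [Complex.norm_intCast]
    rw [this]
    rw [← Int.cast_abs]
    exact_mod_cast Int.one_le_abs hNne
  -- all conjugates of w i₀ have absolute value 1
  have habs1 : ∀ f : K →ₐ[ℚ] ℂ, ‖f (w i₀)‖ = 1 := by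
    intro f
    have hle1 : ∀ g : K →ₐ[ℚ] ℂ, ‖g (w i₀)‖ ≤ 1 := by
      intro g
      have := hle g i₀
      rw [Complex.normSq_eq_norm_sq] at this
      nlinarith [norm_nonneg (g (w i₀))]
    have h0 : ∀ g : K →ₐ[ℚ] ℂ, (0:ℝ) ≤ ‖g (w i₀)‖ :=
      fun g => norm_nonneg _
    have hrest : ∏ g ∈ Finset.univ.erase f, ‖g (w i₀)‖ ≤ 1 :=
      Finset.prod_le_one (fun g _ => h0 g) (fun g _ => hle1 g)
    have hsplit : ∏ g : K →ₐ[ℚ] ℂ, ‖g (w i₀)‖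
        = ‖f (w i₀)‖ * ∏ g ∈ Finset.univ.erase f, ‖g (w i₀)‖ :=
      (Finset.mul_prod_erase _ _ (Finset.mem_univ f)).symm
    have : (1:ℝ) ≤ ‖f (w i₀)‖ := by
      calc (1:ℝ) ≤ _ := hprod
      _ = _ := hsplit
      _ ≤ ‖f (w i₀)‖ * 1 := by
          apply mul_le_mul_of_nonneg_left hrest (h0 f)
      _ = _ := mul_one _
    exact le_antisymm (hle1 f) this
  -- the other z i vanish
  have hvanish : ∀ i, i ≠ i₀ → z i = 0 := by
    intro i hi
    have hkv : ∑ i, Complex.normSq (K.val (w i)) = 1 := key K.val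
    have h1 : Complex.normSq (K.val (w i₀)) = 1 := by
      rw [Complex.normSq_eq_norm_sq]; exact (congrArg (· ^ 2) (habs1 K.val)).trans (one_pow 2)
    have : Complex.normSq (K.val (w i)) = 0 := by
      have hsub : ∑ j ∈ Finset.univ.erase i₀, Complex.normSq (K.val (w j)) = 0 := by
        have hadd := Finset.add_sum_erase Finset.univ
          (fun j => Complex.normSq (K.val (w j))) (Finset.mem_univ i₀)
        linarith [hkv, h1, hadd]
      have := (Finset.sum_eq_zero_iff_of_nonneg
        (fun j _ => Complex.normSq_nonneg _)).mp hsub i (by simp [hi])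
      exact this
    have : K.val (w i) = 0 := Complex.normSq_eq_zero.mp this
    exact this
  -- w i₀ is a root of unity
  have hru : ∃ m : ℕ, 0 < m ∧ z i₀ ^ m = 1 := by
    have hall : ∀ φ : K →+* ℂ, ‖φ (w i₀)‖ = 1 := by
      intro φ
      have : φ (w i₀) = φ.toRatAlgHom (w i₀) := rfl
      rw [this, habs1 φ.toRatAlgHom]
    obtain ⟨m, hm, hpow⟩ := NumberField.Embeddings.pow_eq_one_of_norm_eq_one K ℂ (hwint i₀) hall
    refine ⟨m, hm, ?_⟩
    have := congrArg (algebraMap K ℂ) hpow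
    rw [map_pow, hwc, map_one] at this
    exact this
  exact ⟨⟨i₀, hvanish, hru⟩, rfl⟩
end

section
/- Let V be a complex inner product space, let v_1, …, v_n ∈ V be an orthonormal family, let N ≥ 1, and let c_1, …, c_n ∈ ℤ[ζ_N] (viewed inside ℂ). If the vector u = c_1 v_1 + … + c_n v_n satisfies ⟪u, u⟫ = 1, then there exists an index i₀ such that c_i = 0 for all i ≠ i₀ and c_{i₀} is a root of unity. -/
open Polynomial IntermediateField

lemma conj_of_pow_eq_one {N : ℕ} (hN : 1 ≤ N) {η : ℂ} (hη : η ^ N = 1) :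
    (starRingEnd ℂ) η = η ^ (N - 1) := by
  have habs : ‖η‖ = 1 := Complex.norm_eq_one_of_pow_eq_one hη (by omega)
  have h1 : η ^ (N - 1) * η = 1 := by
    rw [← pow_succ]; rwa [Nat.sub_add_cancel hN]
  have h2 : (starRingEnd ℂ) η * η = 1 := by
    rw [Complex.conj_mul']
    norm_cast
    simp [Complex.normSq_eq_norm_sq, habs]
  have hne : η ≠ 0 := fun h => by simp [h] at h1
  exact mul_right_cancel₀ hne (h2.trans h1.symm)

set_option maxHeartbeats 1000000 in
lemma key {N : ℕ} (hN : 1 ≤ N) {ζ : ℂ} (hζN : ζ ^ N = 1)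
    {n : ℕ} (p : Fin n → Polynomial ℤ)
    (hsum : ∑ i, (Polynomial.aeval ζ (p i)) * (starRingEnd ℂ) (Polynomial.aeval ζ (p i)) = 1) :
    ∃ i₀ : Fin n, (∀ i, i ≠ i₀ → Polynomial.aeval ζ (p i) = 0) ∧
      ∃ m : ℕ, 0 < m ∧ (Polynomial.aeval ζ (p i₀)) ^ m = 1 := by
  have hζint : IsIntegral ℚ ζ :=
    ⟨X ^ N - 1, monic_X_pow_sub_C 1 (by omega), by simp [hζN]⟩
  set K := IntermediateField.adjoin ℚ ({ζ} : Set ℂ) with hK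
  haveI : FiniteDimensional ℚ K := IntermediateField.adjoin.finiteDimensional hζint
  haveI : NumberField K := ⟨⟩
  set ζK : K := ⟨ζ, IntermediateField.subset_adjoin ℚ {ζ} rfl⟩ with hζKdef
  have hcoeζ : (algebraMap K ℂ) ζK = ζ := rfl
  have hζKN : ζK ^ N = 1 := by
    apply Subtype.ext
    push_cast
    exact hζN
  have hζKint : IsIntegral ℤ ζK :=
    ⟨X ^ N - 1, monic_X_pow_sub_C 1 (by omega), by simp [hζKN]⟩
  -- every aeval at ζK of an integer polynomial is integral
  have hint : ∀ q : Polynomial ℤ, IsIntegral ℤ (aeval ζK q) := by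
    intro q
    refine IsIntegral.of_mem_of_fg _ hζKint.fg_adjoin_singleton _ ?_
    rw [Algebra.adjoin_singleton_eq_range_aeval]
    exact ⟨q, rfl⟩
  set x : Fin n → K := fun i => aeval ζK (p i) with hx
  set y : Fin n → K := fun i => aeval (ζK ^ (N - 1)) (p i) with hy
  -- ring hom compatibility
  have haev : ∀ (f : K →+* ℂ) (z : K) (q : Polynomial ℤ), f (aeval z q) = aeval (f z) q := by
    intro f z q
    exact (Polynomial.aeval_algHom_apply f.toIntAlgHom z q).symm
  have hfpow : ∀ (f : K →+* ℂ), (f ζK) ^ N = 1 := by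
    intro f
    rw [← map_pow, hζKN, map_one]
  have hconj : ∀ (f : K →+* ℂ) (i : Fin n), (starRingEnd ℂ) (f (x i)) = f (y i) := by
    intro f i
    have : (starRingEnd ℂ) (f (x i)) = ((starRingEnd ℂ).comp f) (aeval ζK (p i)) := rfl
    rw [this, haev ((starRingEnd ℂ).comp f) ζK (p i)]
    have : ((starRingEnd ℂ).comp f) ζK = (f ζK) ^ (N - 1) :=
      conj_of_pow_eq_one hN (hfpow f)
    rw [this, hy]
    simp only [haev f, map_pow]
  set a : Fin n → K := fun i => x i * y i with ha
  have hfa : ∀ (f : K →+* ℂ) (i : Fin n), f (a i) = (Complex.normSq (f (x i)) : ℂ) := by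
    intro f i
    rw [ha]
    simp only [map_mul, ← hconj f i, Complex.mul_conj]
  have hinj : Function.Injective (algebraMap K ℂ) := (algebraMap K ℂ).injective
  have hsumK : ∑ i, a i = 1 := by
    apply hinj
    rw [map_sum, map_one]
    calc ∑ i, (algebraMap K ℂ) (a i)
        = ∑ i, (aeval ζ (p i)) * (starRingEnd ℂ) (aeval ζ (p i)) := by
          refine Finset.sum_congr rfl fun i _ => ?_
          rw [ha]
          simp only [map_mul, ← hconj (algebraMap K ℂ) i]
          rw [hx]
          simp only [haev (algebraMap K ℂ), hcoeζ]
      _ = 1 := hsum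
  -- for each embedding, the normSq values sum to 1, hence are in [0,1]
  have hemb : ∀ (f : K →+* ℂ), ∑ i, Complex.normSq (f (x i)) = 1 := by
    intro f
    have h1 : ((∑ i, Complex.normSq (f (x i)) : ℝ) : ℂ) = 1 := by
      push_cast
      rw [← funext (hfa f)]
      rw [← map_sum, hsumK, map_one]
    exact_mod_cast h1
  -- each normSq value is in [0,1]
  have hle1 : ∀ (f : K →+* ℂ) (i : Fin n), Complex.normSq (f (x i)) ≤ 1 := by
    intro f i
    rw [← hemb f]
    exact Finset.single_le_sum (f := fun j => Complex.normSq (f (x j)))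
      (fun j _ => Complex.normSq_nonneg _) (Finset.mem_univ i)
  -- key claim: each nonzero x i has all conjugates of normSq one
  have hclaim : ∀ i : Fin n, x i ≠ 0 → ∀ σ : K →ₐ[ℚ] ℂ, Complex.normSq (σ (x i)) = 1 := by
    classical
    intro i hxi σ
    have hyval : y i = aeval ζK ((p i).comp (X ^ (N - 1))) := by
      rw [hy, Polynomial.aeval_comp, map_pow, Polynomial.aeval_X]
    have haint : IsIntegral ℤ (a i) := by
      rw [ha]
      exact (hint (p i)).mul (hyval ▸ hint ((p i).comp (X ^ (N - 1))))
    have hyne : y i ≠ 0 := by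
      intro h0
      apply hxi
      apply hinj
      have := hconj (algebraMap K ℂ) i
      rw [h0, map_zero] at this
      have : (algebraMap K ℂ) (x i) = 0 := by
        have := congrArg (starRingEnd ℂ) this
        simpa using this
      simpa using this
    have hane : a i ≠ 0 := mul_ne_zero hxi hyne
    set d : ℚ := Algebra.norm ℚ (a i) with hd
    have hdne : d ≠ 0 := by
      rw [hd]
      exact (Algebra.norm_ne_zero_iff).2 hane
    have hdint : IsIntegral ℤ d := Algebra.isIntegral_norm ℚ haint
    obtain ⟨z, hz⟩ := IsIntegrallyClosed.isIntegral_iff.mp hdint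
    have hprod : (algebraMap ℚ ℂ) d = ∏ τ : K →ₐ[ℚ] ℂ, τ (a i) :=
      Algebra.norm_eq_prod_embeddings ℚ ℂ (a i)
    have hτ : ∀ τ : K →ₐ[ℚ] ℂ, τ (a i) = (Complex.normSq (τ (x i)) : ℂ) := fun τ =>
      hfa τ.toRingHom i
    set R : ℝ := ∏ τ : K →ₐ[ℚ] ℂ, Complex.normSq (τ (x i)) with hR
    have hRd : ((R : ℂ)) = (algebraMap ℚ ℂ) d := by
      rw [hprod, hR]
      push_cast
      exact Finset.prod_congr rfl fun τ _ => (hτ τ).symm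
    have hRd' : (d : ℝ) = R := by
      have : ((d : ℝ) : ℂ) = (R : ℂ) := by
        rw [hRd]; norm_cast
      exact_mod_cast this
    have hRnonneg : 0 ≤ R := Finset.prod_nonneg fun τ _ => Complex.normSq_nonneg _
    have hRle1 : R ≤ 1 := Finset.prod_le_one (fun τ _ => Complex.normSq_nonneg _)
      (fun τ _ => hle1 τ.toRingHom i)
    rw [algebraMap_int_eq, eq_comm] at hz
    have hz' : d = (z : ℚ) := by exact_mod_cast hz
    have hd0 : 0 ≤ d := by
      have : (0:ℝ) ≤ (d:ℝ) := hRd' ▸ hRnonneg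
      exact_mod_cast this
    have hdpos : 0 < d := lt_of_le_of_ne hd0 (Ne.symm hdne)
    have hz1 : 1 ≤ z := by
      have : (0:ℚ) < (z:ℚ) := hz' ▸ hdpos
      have : 0 < z := by exact_mod_cast this
      omega
    have hd1 : 1 ≤ d := by
      rw [hz']; exact_mod_cast hz1
    have hR1 : R = 1 := by
      have h1R : (1:ℝ) ≤ R := by
        rw [← hRd']; exact_mod_cast hd1
      linarith
    -- conclude each factor equals 1
    have hge : 1 ≤ Complex.normSq (σ (x i)) := by
      have hfac := Finset.mul_prod_erase Finset.univ
        (fun τ : K →ₐ[ℚ] ℂ => Complex.normSq (τ (x i))) (Finset.mem_univ σ)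
      have herase : ∏ τ ∈ Finset.univ.erase σ, Complex.normSq (τ (x i)) ≤ 1 :=
        Finset.prod_le_one (fun τ _ => Complex.normSq_nonneg _)
          (fun τ _ => hle1 τ.toRingHom i)
      have := hR1
      rw [hR, ← hfac] at this
      nlinarith [Complex.normSq_nonneg (σ (x i)),
        Finset.prod_nonneg (fun τ (_ : τ ∈ Finset.univ.erase σ) => Complex.normSq_nonneg (τ (x i)))]
    have hle : Complex.normSq (σ (x i)) ≤ 1 := hle1 σ.toRingHom i
    linarith
  -- the values C i = aeval ζ (p i)
  have hxC : ∀ i, (algebraMap K ℂ) (x i) = aeval ζ (p i) := by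
    intro i
    rw [hx]
    simp only [haev (algebraMap K ℂ), hcoeζ]
  have hx0 : ∀ i, x i = 0 ↔ aeval ζ (p i) = 0 := by
    intro i
    constructor
    · intro h; rw [← hxC i, h, map_zero]
    · intro h; exact hinj (by rw [map_zero, hxC i, h])
  have hCsum : ∑ i, Complex.normSq (aeval ζ (p i)) = 1 := by
    have := hemb (algebraMap K ℂ)
    simpa only [hxC] using this
  have hex : ∃ i₀, aeval ζ (p i₀) ≠ 0 := by
    by_contra h
    push_neg at h
    rw [Finset.sum_eq_zero (fun i _ => by rw [h i, Complex.normSq_zero])] at hCsum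
    norm_num at hCsum
  obtain ⟨i₀, hi₀⟩ := hex
  have hval : ∀ i, Complex.normSq (K.val (x i)) = Complex.normSq (aeval ζ (p i)) := fun i => by
    rw [show K.val (x i) = (algebraMap K ℂ) (x i) from rfl, hxC i]
  refine ⟨i₀, ?_, ?_⟩
  · intro i hi
    by_contra hCi
    have h1 : Complex.normSq (aeval ζ (p i₀)) = 1 := by
      rw [← hval i₀]; exact hclaim i₀ (fun h => hi₀ ((hx0 i₀).mp h)) K.val
    have h2 : Complex.normSq (aeval ζ (p i)) = 1 := by
      rw [← hval i]; exact hclaim i (fun h => hCi ((hx0 i).mp h)) K.val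
    have hsub : ∑ j ∈ ({i, i₀} : Finset (Fin n)), Complex.normSq (aeval ζ (p j)) ≤ 1 := by
      rw [← hCsum]
      exact Finset.sum_le_sum_of_subset_of_nonneg (Finset.subset_univ _)
        (fun j _ _ => Complex.normSq_nonneg _)
    rw [Finset.sum_pair hi] at hsub
    rw [h1, h2] at hsub
    norm_num at hsub
  · have hxi₀ : x i₀ ≠ 0 := fun h => hi₀ ((hx0 i₀).mp h)
    obtain ⟨m, hm, hpow⟩ := NumberField.Embeddings.pow_eq_one_of_norm_eq_one K ℂ
      (hint (p i₀)) (fun φ => by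
        have h2 : Complex.normSq (φ (x i₀)) = 1 := hclaim i₀ hxi₀ φ.toRatAlgHom
        have h3 : ‖φ (x i₀)‖ ^ 2 = 1 := by
          rw [← Complex.normSq_eq_norm_sq, h2]
        nlinarith [norm_nonneg (φ (x i₀))])
    refine ⟨m, hm, ?_⟩
    rw [← hxC i₀, ← map_pow, hpow, map_one]

/-- If `v_1, …, v_n` is an orthonormal family in a complex inner product space and
`c_1, …, c_n ∈ ℤ[ζ_N]` are cyclotomic integers such that `u = ∑ c_i v_i` has
`⟪u, u⟫ = 1`, then all `c_i` vanish except one, which is a root of unity. -/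
theorem stmt3 {V : Type*} [NormedAddCommGroup V] [InnerProductSpace ℂ V]
    (n N : ℕ) (hN : 1 ≤ N) (ζ : ℂ) (hζ : IsPrimitiveRoot ζ N)
    (v : Fin n → V) (hv : Orthonormal ℂ v)
    (c : Fin n → ℂ) (hc : ∀ i, c i ∈ Subring.closure ({ζ} : Set ℂ))
    (hu : (inner ℂ (∑ i, c i • v i) (∑ i, c i • v i) : ℂ) = 1) :
    ∃ i₀ : Fin n, (∀ i, i ≠ i₀ → c i = 0) ∧ ∃ m : ℕ, 0 < m ∧ c i₀ ^ m = 1 := by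
  rw [hv.inner_sum] at hu
  have hrep : ∀ i, ∃ q : Polynomial ℤ, aeval ζ q = c i := by
    intro i
    have hmem : c i ∈ Algebra.adjoin ℤ ({ζ} : Set ℂ) := by
      rw [Algebra.adjoin_int]
      exact hc i
    rw [Algebra.adjoin_singleton_eq_range_aeval] at hmem
    exact hmem
  choose p hp using hrep
  have hsum : ∑ i, (aeval ζ (p i)) * (starRingEnd ℂ) (aeval ζ (p i)) = 1 := by
    simp_rw [hp]
    rw [← hu]
    exact Finset.sum_congr rfl fun i _ => mul_comm _ _
  obtain ⟨i₀, h1, m, hm, h2⟩ := key hN hζ.pow_eq_one p hsum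
  exact ⟨i₀, fun i hi => (hp i) ▸ h1 i hi, m, hm, (hp i₀) ▸ h2⟩
end

section
/- Let n ≥ 1 and let i be an integer with 1 ≤ i ≤ n. Then there exist pairwise distinct complex numbers x_1, …, x_{n+1} such that x_1 · x_2 ⋯ x_{n+1} = 1, the values x_k^{n+1} are equal for all k = 1, …, n+1, and (x_1 · x_2 ⋯ x_i)^{n+1} = (−1)^{i(n+1−i)}. -/
open Complex Finset

private lemma sum_aux (n m : ℕ) : ∑ k ∈ Finset.range m, (n + 2*k) = m*n + m*(m-1) := by
  have h := Finset.sum_range_id_mul_two m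
  rw [Finset.sum_add_distrib, Finset.sum_const, Finset.card_range, ← Finset.mul_sum, ← h]
  ring

private lemma exp_nat_pi (a : ℕ) :
    Complex.exp ((a : ℂ) * ((Real.pi : ℂ) * Complex.I)) = (-1 : ℂ) ^ a := by
  rw [Complex.exp_nat_mul, Complex.exp_pi_mul_I]

/-- Existence of `t_0` for type `A_n` and any maximal parabolic: there are pairwise
distinct complex numbers `x_1, …, x_{n+1}` with product `1`, all `x_k^{n+1}` equal,
and `(x_1 ⋯ x_i)^{n+1} = (−1)^{i(n+1−i)}`. -/
theorem stmt9 (n i : ℕ) (hn : 1 ≤ n) (hi1 : 1 ≤ i) (hi2 : i ≤ n) :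
    ∃ x : ℕ → ℂ,
      (∀ k l, k < n + 1 → l < n + 1 → k ≠ l → x k ≠ x l) ∧
      (∏ k ∈ Finset.range (n + 1), x k) = 1 ∧
      (∀ k l, k < n + 1 → l < n + 1 → x k ^ (n + 1) = x l ^ (n + 1)) ∧
      (∏ k ∈ Finset.range i, x k) ^ (n + 1) = (-1 : ℂ) ^ (i * (n + 1 - i)) := by
  have hn1 : ((n:ℂ) + 1) ≠ 0 := by
    exact_mod_cast Nat.cast_add_one_ne_zero (R := ℂ) n
  set u : ℂ := (Real.pi : ℂ) * Complex.I / ((n:ℂ) + 1) with hu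
  have hmul : ((n:ℂ) + 1) * u = (Real.pi : ℂ) * Complex.I := by
    rw [hu]; field_simp
  have hpiI : (Real.pi : ℂ) * Complex.I ≠ 0 :=
    mul_ne_zero (by exact_mod_cast Real.pi_ne_zero) Complex.I_ne_zero
  -- general computation of partial products
  have hprod : ∀ M : ℕ, (∏ k ∈ Finset.range M, Complex.exp (((n:ℂ) + 2*k) * u)) =
      Complex.exp (((M*n + M*(M-1) : ℕ) : ℂ) * u) := by
    intro M
    rw [← Complex.exp_sum]
    congr 1
    rw [← Finset.sum_mul]
    congr 1
    rw [← sum_aux n M]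
    push_cast
    ring
  refine ⟨fun k => Complex.exp (((n:ℂ) + 2*k) * u), ?_, ?_, ?_, ?_⟩
  · -- distinctness
    intro k l hk hl hkl heq
    rw [Complex.exp_eq_exp_iff_exists_int] at heq
    obtain ⟨m, hm⟩ := heq
    have h2 : ((n:ℂ) + 2*k) * ((Real.pi:ℂ)*Complex.I) =
        ((n:ℂ) + 2*l) * ((Real.pi:ℂ)*Complex.I)
          + (m:ℂ) * (2 * Real.pi * Complex.I) * ((n:ℂ)+1) := by
      rw [← hmul]
      linear_combination ((n:ℂ)+1) * hm
    have h3 : ((k:ℂ)) * ((Real.pi:ℂ)*Complex.I) =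
        ((l:ℂ) + (m:ℂ)*((n:ℂ)+1)) * ((Real.pi:ℂ)*Complex.I) := by
      linear_combination h2 / 2
    have h4 : (k:ℂ) = (l:ℂ) + (m:ℂ)*((n:ℂ)+1) := mul_right_cancel₀ hpiI h3
    have h5 : (k:ℤ) = (l:ℤ) + m*((n:ℤ)+1) := by exact_mod_cast h4
    have h6 : ((n:ℤ)+1) ∣ ((k:ℤ) - l) := ⟨m, by linarith⟩
    have h7 : (k:ℤ) - l = 0 := by
      refine Int.eq_zero_of_abs_lt_dvd h6 ?_
      have : |(k:ℤ) - l| ≤ (n:ℤ) := by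
        rw [abs_sub_le_iff]
        omega
      omega
    exact hkl (by omega)
  · -- total product is 1
    rw [hprod]
    have : ((n+1)*n + (n+1)*((n+1)-1) : ℕ) = 2*n*(n+1) := by
      simp; ring
    rw [this]
    have : ((2*n*(n+1) : ℕ) : ℂ) * u = ((2*n : ℕ) : ℂ) * ((Real.pi:ℂ)*Complex.I) := by
      rw [← hmul]; push_cast; ring
    rw [this, exp_nat_pi, pow_mul]
    norm_num
  · -- all (n+1)-th powers equal
    have key : ∀ k : ℕ, Complex.exp (((n:ℂ) + 2*k) * u) ^ (n+1) = (-1:ℂ)^n := by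
      intro k
      rw [← Complex.exp_nat_mul]
      have : ((n+1 : ℕ) : ℂ) * (((n:ℂ) + 2*k) * u) =
          ((n + 2*k : ℕ) : ℂ) * ((Real.pi:ℂ)*Complex.I) := by
        rw [← hmul]; push_cast; ring
      rw [this, exp_nat_pi, pow_add, pow_mul]
      norm_num
    intro k l _ _
    rw [key, key]
  · -- partial product power
    rw [hprod]
    rw [← Complex.exp_nat_mul]
    have : ((n+1 : ℕ) : ℂ) * (((i*n + i*(i-1) : ℕ) : ℂ) * u) =
        ((i*n + i*(i-1) : ℕ) : ℂ) * ((Real.pi:ℂ)*Complex.I) := by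
      rw [← hmul]; push_cast; ring
    rw [this, exp_nat_pi]
    -- parity argument
    have hsum : (i*n + i*(i-1)) + i*(n+1-i) = 2*(i*n) := by
      have h1 : (i-1) + (n+1-i) = n := by omega
      have := congrArg (i * ·) h1
      simp only [Nat.mul_add] at this ⊢
      omega
    have h2t : ((-1:ℂ))^(2*(i*(n+1-i))) = 1 := by
      rw [pow_mul]; norm_num
    have hst : ((-1:ℂ))^((i*n + i*(i-1)) + i*(n+1-i)) = 1 := by
      rw [hsum, pow_mul]; norm_num
    calc ((-1:ℂ))^(i*n + i*(i-1))
        = ((-1:ℂ))^(i*n + i*(i-1)) * ((-1:ℂ))^(2*(i*(n+1-i))) := by rw [h2t, mul_one]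
      _ = ((-1:ℂ))^((i*n + i*(i-1)) + i*(n+1-i)) * ((-1:ℂ))^(i*(n+1-i)) := by
          rw [← pow_add, ← pow_add]; ring_nf
      _ = ((-1:ℂ))^(i*(n+1-i)) := by rw [hst, one_mul]
end

section
/- Let n ≥ 2 and let ζ ∈ ℂ be a primitive 2n-th root of unity, and set x_k = ζ^k for k = 1, …, n. Then x_k ≠ 1 for all k; for all k < l both x_k ≠ x_l and x_k · x_l ≠ 1; and every complex number x with x² = x_1 · x_2 ⋯ x_n satisfies x^{2n} = (−1)^{n(n+1)/2}. -/
/-- Verification of condition (⋆) for type `B_n`, last simple root: with `ζ` a primitive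
`2n`-th root of unity and `x_k = ζ^k` (`1 ≤ k ≤ n`), one has `x_k ≠ 1`, the `x_k` are
pairwise distinct with `x_k x_l ≠ 1`, and any square root `x` of `x_1 ⋯ x_n` satisfies
`x^{2n} = (−1)^{n(n+1)/2}`. -/
theorem stmt10 (n : ℕ) (hn : 2 ≤ n) (ζ : ℂ) (hζ : IsPrimitiveRoot ζ (2 * n)) :
    (∀ k, 1 ≤ k → k ≤ n → ζ ^ k ≠ 1) ∧
    (∀ k l, 1 ≤ k → k < l → l ≤ n → ζ ^ k ≠ ζ ^ l ∧ ζ ^ k * ζ ^ l ≠ 1) ∧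
    (∀ x : ℂ, x ^ 2 = ∏ k ∈ Finset.Icc 1 n, ζ ^ k →
      x ^ (2 * n) = (-1 : ℂ) ^ (n * (n + 1) / 2)) := by
  have hone : ∀ m : ℕ, ζ ^ m = 1 ↔ 2 * n ∣ m := fun m => hζ.pow_eq_one_iff_dvd m
  have hne : ∀ m : ℕ, 1 ≤ m → m < 2 * n → ζ ^ m ≠ 1 := by
    intro m h1 h2 h
    have := Nat.le_of_dvd (by omega) ((hone m).mp h)
    omega
  refine ⟨fun k h1 h2 => hne k h1 (by omega), fun k l h1 h2 h3 => ⟨?_, ?_⟩, ?_⟩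
  · intro h
    have heq : ζ ^ k * ζ ^ (l - k) = ζ ^ k * 1 := by
      rw [mul_one, ← pow_add]
      rw [h]; congr 1; omega
    have h0 : ζ ^ k ≠ 0 := pow_ne_zero k (hζ.ne_zero (by omega))
    exact hne (l - k) (by omega) (by omega) (mul_left_cancel₀ h0 heq)
  · rw [← pow_add]
    exact hne (k + l) (by omega) (by omega)
  · intro x hx
    have h2 : ∀ m : ℕ, (∑ k ∈ Finset.Icc 1 m, k) * 2 = m * (m + 1) := by
      intro m
      induction m with
      | zero => simp
      | succ p ih =>
        rw [Finset.sum_Icc_succ_top (by omega), add_mul, ih]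
        ring
    have hS : ∑ k ∈ Finset.Icc 1 n, k = n * (n + 1) / 2 := by
      have := h2 n; omega
    have hp2 : IsPrimitiveRoot (ζ ^ n) 2 := hζ.pow (by omega) (by ring)
    have hneg : ζ ^ n = -1 := hp2.eq_neg_one_of_two_right
    calc x ^ (2 * n) = (x ^ 2) ^ n := by rw [← pow_mul]
      _ = (ζ ^ (n * (n + 1) / 2)) ^ n := by
          rw [hx, Finset.prod_pow_eq_pow_sum, hS]
      _ = (ζ ^ n) ^ (n * (n + 1) / 2) := by
          rw [← pow_mul, ← pow_mul, mul_comm]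
      _ = (-1 : ℂ) ^ (n * (n + 1) / 2) := by rw [hneg]
end

section
/- Let n ≥ 1 and let ζ ∈ ℂ be a primitive (2n+2)-th root of unity, and set x_k = ζ^k for k = 1, …, n. Then x_k ≠ 1 and x_k ≠ −1 for all k; for all k < l both x_k ≠ x_l and x_k · x_l ≠ 1; and (x_1 · x_2 ⋯ x_n)^{n+1} = (−1)^{n(n+1)/2}. -/
/-- Verification of condition (⋆) for type `C_n`, last simple root: with `ζ` a primitive
`(2n+2)`-th root of unity and `x_k = ζ^k` (`1 ≤ k ≤ n`), one has `x_k ≠ ±1`, the `x_k`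
are pairwise distinct with `x_k x_l ≠ 1`, and `(x_1 ⋯ x_n)^{n+1} = (−1)^{n(n+1)/2}`. -/
theorem stmt11 (n : ℕ) (hn : 1 ≤ n) (ζ : ℂ) (hζ : IsPrimitiveRoot ζ (2 * n + 2)) :
    (∀ k, 1 ≤ k → k ≤ n → ζ ^ k ≠ 1 ∧ ζ ^ k ≠ -1) ∧
    (∀ k l, 1 ≤ k → k < l → l ≤ n → ζ ^ k ≠ ζ ^ l ∧ ζ ^ k * ζ ^ l ≠ 1) ∧
    (∏ k ∈ Finset.Icc 1 n, ζ ^ k) ^ (n + 1) = (-1 : ℂ) ^ (n * (n + 1) / 2) := by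
  have hone : ∀ m : ℕ, 1 ≤ m → m < 2 * n + 2 → ζ ^ m ≠ 1 := by
    intro m hm1 hm2 h
    have := (hζ.pow_eq_one_iff_dvd m).mp h
    have := Nat.le_of_dvd (by omega) this
    omega
  have hneg : ζ ^ (n + 1) = -1 := by
    have h2 : (ζ ^ (n + 1)) ^ 2 = 1 := by
      rw [← pow_mul]
      have : (n + 1) * 2 = 2 * n + 2 := by ring
      rw [this, hζ.pow_eq_one]
    rcases sq_eq_one_iff.mp h2 with h | h
    · exact absurd h (hone (n + 1) (by omega) (by omega))
    · exact h
  refine ⟨?_, ?_, ?_⟩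
  · intro k hk1 hk2
    refine ⟨hone k hk1 (by omega), fun h => ?_⟩
    have : ζ ^ (k + (n + 1)) = 1 := by
      rw [pow_add, h, hneg]; ring
    exact hone (k + (n + 1)) (by omega) (by omega) this
  · intro k l hk hkl hl
    constructor
    · intro h
      have hz : ζ ≠ 0 := hζ.ne_zero (by omega)
      have : ζ ^ (l - k) = 1 := by
        have : ζ ^ l = ζ ^ k * ζ ^ (l - k) := by
          rw [← pow_add]; congr 1; omega
        rw [this] at h
        have hk0 : ζ ^ k ≠ 0 := pow_ne_zero _ hz
        field_simp at h
        exact h.symm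
      exact hone (l - k) (by omega) (by omega) this
    · intro h
      rw [← pow_add] at h
      exact hone (k + l) (by omega) (by omega) h
  · rw [Finset.prod_pow_eq_pow_sum]
    have hs : ∑ k ∈ Finset.Icc 1 n, k = n * (n + 1) / 2 := by
      have h1 : ∑ k ∈ Finset.Icc 1 n, k = n + ∑ k ∈ Finset.range n, k := by
        rw [← Finset.Ico_add_one_right_eq_Icc, Finset.sum_Ico_eq_sum_range]
        simp [Finset.sum_add_distrib, add_comm]
      have h2 := Finset.sum_range_id_mul_two n
      obtain ⟨m, rfl⟩ : ∃ m, n = m + 1 := ⟨n - 1, by omega⟩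
      have h3 : (∑ k ∈ Finset.Icc 1 (m + 1), k) * 2 = (m + 1) * (m + 1 + 1) := by
        rw [h1, add_mul, h2]; simp; ring
      omega
    rw [hs, ← pow_mul, mul_comm, pow_mul, hneg]
end
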